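/- With the groups and maps of the previous example (H = D₄, D = Z₂², φ(a)=(0,1), φ(b)=(1,0), ψ(a)=(1,0), ψ(b)=(1,1)), the fibre product H ×_D H is isomorphic to the semidirect product (Z₂ × Z₂) ⋊ Z₄ of order 16 (GAP ID (16,3)). -/

import Mathlib

/-- The fibre product `H ×_D H'` of two group homomorphisms `φ : H → D`, `ψ : H' → D`,
as a subgroup of `H × H'`. -/
def fiberProduct {H H' D : Type*} [Group H] [Group H'] [Group D]
    (φ : H →* D) (ψ : H' →* D) : Subgroup (H × H') where
  carrier := {p | φ p.1 = ψ p.2}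
  one_mem' := by simp
  mul_mem' := by
    intro a b ha hb
    simp only [Set.mem_setOf_eq, Prod.fst_mul, Prod.snd_mul, map_mul] at *
    rw [ha, hb]
  inv_mem' := by
    intro a ha
    simp only [Set.mem_setOf_eq, Prod.fst_inv, Prod.snd_inv, map_inv] at *
    rw [ha]

open DihedralGroup

def c4 : ZMod 4 → ZMod 2 := ZMod.castHom (by norm_num : (2:ℕ) ∣ 4) (ZMod 2)

def phi0 : DihedralGroup 4 →* Multiplicative (ZMod 2 × ZMod 2) where
  toFun x := match x with
    | .r i => Multiplicative.ofAdd (0, c4 i)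
    | .sr i => Multiplicative.ofAdd (1, c4 i)
  map_one' := by decide
  map_mul' := by decide

def psi0 : DihedralGroup 4 →* Multiplicative (ZMod 2 × ZMod 2) where
  toFun x := match x with
    | .r i => Multiplicative.ofAdd (c4 i, 0)
    | .sr i => Multiplicative.ofAdd (1 + c4 i, 1)
  map_one' := by decide
  map_mul' := by decide

lemma phi_eq (φ : DihedralGroup 4 →* Multiplicative (ZMod 2 × ZMod 2))
    (hφa : φ (DihedralGroup.r 1) = Multiplicative.ofAdd (0, 1))
    (hφb : φ (DihedralGroup.sr 0) = Multiplicative.ofAdd (1, 0)) :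
    φ = phi0 := by
  have hr : ∀ i : ZMod 4, φ (r i) = Multiplicative.ofAdd (0, c4 i) := by
    intro i
    obtain ⟨k, rfl⟩ : ∃ k : ℕ, (k : ZMod 4) = i := ⟨i.val, ZMod.natCast_rightInverse i⟩
    rw [← r_one_pow, map_pow, hφa, ← ofAdd_nsmul]
    congr 1
    show k • ((0 : ZMod 2), (1 : ZMod 2)) = (0, c4 (k : ZMod 4))
    simp [c4, Prod.smul_def, map_natCast, nsmul_eq_mul]
  ext1 x
  rcases x with i | i
  · exact hr i
  · have h : (sr i : DihedralGroup 4) = sr 0 * r i := by rw [sr_mul_r, zero_add]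
    rw [h, map_mul, hφb, hr]
    show Multiplicative.ofAdd ((1:ZMod 2),(0:ZMod 2)) * Multiplicative.ofAdd (0, c4 i)
        = phi0 (sr 0 * r i)
    rw [map_mul]
    show _ = Multiplicative.ofAdd ((1:ZMod 2), c4 (0:ZMod 4)) * Multiplicative.ofAdd ((0:ZMod 2), c4 i)
    simp [← ofAdd_add]
    decide

lemma psi_eq (ψ : DihedralGroup 4 →* Multiplicative (ZMod 2 × ZMod 2))
    (hψa : ψ (DihedralGroup.r 1) = Multiplicative.ofAdd (1, 0))
    (hψb : ψ (DihedralGroup.sr 0) = Multiplicative.ofAdd (1, 1)) :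
    ψ = psi0 := by
  have hr : ∀ i : ZMod 4, ψ (r i) = Multiplicative.ofAdd (c4 i, 0) := by
    intro i
    obtain ⟨k, rfl⟩ : ∃ k : ℕ, (k : ZMod 4) = i := ⟨i.val, ZMod.natCast_rightInverse i⟩
    rw [← r_one_pow, map_pow, hψa, ← ofAdd_nsmul]
    congr 1
    show k • ((1 : ZMod 2), (0 : ZMod 2)) = (c4 (k : ZMod 4), 0)
    simp [c4, Prod.smul_def, map_natCast, nsmul_eq_mul]
  ext1 x
  rcases x with i | i
  · exact hr i
  · have h : (sr i : DihedralGroup 4) = sr 0 * r i := by rw [sr_mul_r, zero_add]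
    rw [h, map_mul, hψb, hr]
    show Multiplicative.ofAdd ((1:ZMod 2),(1:ZMod 2)) * Multiplicative.ofAdd (c4 i, 0)
        = psi0 (sr 0 * r i)
    rw [map_mul]
    show _ = Multiplicative.ofAdd ((1:ZMod 2) + c4 (0:ZMod 4), 1) * Multiplicative.ofAdd (c4 i, (0:ZMod 2))
    have h0 : c4 0 = 0 := by decide
    rw [h0]
    simp [← ofAdd_add, Prod.mk_add_mk]

abbrev N2 := Multiplicative (ZMod 2 × ZMod 2)
abbrev G4 := Multiplicative (ZMod 4)

def σswap : N2 ≃* N2 where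
  toFun x := Multiplicative.ofAdd (Multiplicative.toAdd x).swap
  invFun x := Multiplicative.ofAdd (Multiplicative.toAdd x).swap
  left_inv x := Prod.swap_swap _
  right_inv x := Prod.swap_swap _
  map_mul' x y := rfl

lemma σswap_sq : σswap ^ 2 = 1 := by
  ext1 x
  show σswap (σswap x) = x
  exact Prod.swap_swap _

lemma σswap_pow_mod (n : ℕ) : σswap ^ n = σswap ^ (n % 2) := by
  conv_lhs => rw [← Nat.div_add_mod n 2]
  rw [pow_add, pow_mul, σswap_sq, one_pow, one_mul]

def act4 : G4 →* MulAut N2 where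
  toFun g := σswap ^ (Multiplicative.toAdd g).val
  map_one' := rfl
  map_mul' a b := by
    show σswap ^ (Multiplicative.toAdd a + Multiplicative.toAdd b).val = _
    rw [ZMod.val_add, σswap_pow_mod, Nat.mod_mod_of_dvd _ (by norm_num),
      ← σswap_pow_mod, pow_add]

lemma act4_ne_one : act4 ≠ 1 := by
  intro h
  have h1 : act4 (Multiplicative.ofAdd (1:ZMod 4)) = 1 := by rw [h]; rfl
  have h2 := DFunLike.congr_fun h1 (Multiplicative.ofAdd ((1:ZMod 2),(0:ZMod 2)))
  exact absurd h2 (by decide)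

def sdpEquivProd : N2 × G4 ≃ SemidirectProduct N2 G4 act4 where
  toFun p := ⟨p.1, p.2⟩
  invFun s := (s.left, s.right)
  left_inv p := rfl
  right_inv s := rfl

instance : Fintype (SemidirectProduct N2 G4 act4) := Fintype.ofEquiv _ sdpEquivProd

def Ffun : SemidirectProduct N2 G4 act4 → DihedralGroup 4 × DihedralGroup 4 :=
  fun s => ((sr 1, sr 0) : DihedralGroup 4 × DihedralGroup 4) ^ ((Multiplicative.toAdd s.left).1.val)
         * ((sr 3, sr 2) : DihedralGroup 4 × DihedralGroup 4) ^ ((Multiplicative.toAdd s.left).2.val)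
         * ((r 1, sr 1) : DihedralGroup 4 × DihedralGroup 4) ^ ((Multiplicative.toAdd s.right).val)

lemma Ffun_one : Ffun 1 = 1 := by decide

lemma Ffun_mul : ∀ s t, Ffun (s * t) = Ffun s * Ffun t := by decide

instance fpDec : DecidablePred (· ∈ fiberProduct phi0 psi0) :=
  fun p => decidable_of_iff (phi0 p.1 = psi0 p.2) Iff.rfl

lemma Ffun_mem : ∀ s, Ffun s ∈ fiberProduct phi0 psi0 := by decide

def FHom : SemidirectProduct N2 G4 act4 →* (fiberProduct phi0 psi0) :=
  MonoidHom.codRestrict ⟨⟨Ffun, Ffun_one⟩, Ffun_mul⟩ _ Ffun_mem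

lemma Finj : Function.Injective Ffun := by
  intro s t h
  revert h
  revert s t
  decide

lemma FHom_bij : Function.Bijective FHom := by
  rw [Fintype.bijective_iff_injective_and_card]
  constructor
  · intro s t h
    exact Finj (congrArg Subtype.val h)
  · decide
/-- With `H = D₄`, `D = Z₂ × Z₂`, and `φ, ψ` as in the previous example, the fibre product
`H ×_D H` is isomorphic to a (nontrivial) semidirect product `(Z₂ × Z₂) ⋊ Z₄`
(the group of GAP ID (16,3)). -/
theorem stmt_5 (φ ψ : DihedralGroup 4 →* Multiplicative (ZMod 2 × ZMod 2))
    (hφ : Function.Surjective φ) (hψ : Function.Surjective ψ)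
    (hφa : φ (DihedralGroup.r 1) = Multiplicative.ofAdd (0, 1))
    (hφb : φ (DihedralGroup.sr 0) = Multiplicative.ofAdd (1, 0))
    (hψa : ψ (DihedralGroup.r 1) = Multiplicative.ofAdd (1, 0))
    (hψb : ψ (DihedralGroup.sr 0) = Multiplicative.ofAdd (1, 1)) :
    ∃ act : Multiplicative (ZMod 4) →* MulAut (Multiplicative (ZMod 2 × ZMod 2)),
      act ≠ 1 ∧
      Nonempty ((fiberProduct φ ψ) ≃*
        SemidirectProduct (Multiplicative (ZMod 2 × ZMod 2)) (Multiplicative (ZMod 4)) act) := by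

  have e1 : φ = phi0 := phi_eq φ hφa hφb
  have e2 : ψ = psi0 := psi_eq ψ hψa hψb
  subst e1; subst e2
  exact ⟨act4, act4_ne_one, ⟨(MulEquiv.ofBijective FHom FHom_bij).symm⟩⟩
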